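/- Let m ≥ 2, let λ ∈ ℤ^m satisfy λ₁ ≥ λ₂ ≥ ⋯ ≥ λ_m, and let w be a permutation of {1,…,m}. Then the vector λ − w(λ) = (λ_i − λ_{w(i)})_{i=1}^m is a sum of positive roots of type A_{m−1}, and the minimal number n(λ,w) of positive roots (with repetitions) summing to it equals Σ_{i : λ_i > λ_{w(i)}} (λ_i − λ_{w(i)}), i.e. the sum of the positive entries of λ − w(λ). -/

import Mathlib

/-- The positive roots of type `A_{m-1}`, realized in `ℤ^m` as the vectors
`ε_i - ε_j` for `i < j`. -/
def typeAPositiveRoots (m : ℕ) : Set (Fin m → ℤ) :=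
  {v | ∃ i j : Fin m, i < j ∧ v = Pi.single i 1 - Pi.single j 1}

private lemma root_apply {m : ℕ} (i j k : Fin m) :
    ((Pi.single i 1 - Pi.single j 1 : Fin m → ℤ)) k
      = (if k = i then 1 else 0) - (if k = j then 1 else 0) := by
  simp [Pi.single_apply]

private lemma root_toNat_sum {m : ℕ} {x : Fin m → ℤ} (hx : x ∈ typeAPositiveRoots m) :
    ∑ k : Fin m, (x k).toNat = 1 := by
  obtain ⟨i, j, hij, rfl⟩ := hx
  rw [Finset.sum_eq_single_of_mem i (Finset.mem_univ i)]
  · rw [root_apply]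
    simp [hij.ne]
  · intro k _ hk
    rw [root_apply]
    simp only [if_neg hk]
    split <;> omega

private lemma sum_toNat_le_length {m : ℕ} : ∀ l : List (Fin m → ℤ),
    (∀ x ∈ l, x ∈ typeAPositiveRoots m) → (∑ i : Fin m, (l.sum i).toNat) ≤ l.length := by
  intro l
  induction l with
  | nil => intro _; simp
  | cons x l ih =>
    intro h
    have hx := h x List.mem_cons_self
    have hl := fun y hy => h y (List.mem_cons_of_mem x hy)
    have h1 : (∑ i : Fin m, ((x :: l).sum i).toNat)
        ≤ (∑ i : Fin m, (x i).toNat) + ∑ i : Fin m, (l.sum i).toNat := by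
      rw [← Finset.sum_add_distrib]
      apply Finset.sum_le_sum
      intro i _
      simp only [List.sum_cons, Pi.add_apply]
      omega
    calc (∑ i : Fin m, ((x :: l).sum i).toNat)
        ≤ (∑ i : Fin m, (x i).toNat) + ∑ i : Fin m, (l.sum i).toNat := h1
      _ ≤ 1 + l.length := by
          rw [root_toNat_sum hx]
          exact Nat.add_le_add_left (ih hl) 1
      _ = (x :: l).length := by simp [Nat.add_comm]

private lemma exists_root_list {m : ℕ} : ∀ N : ℕ, ∀ v : Fin m → ℤ,
    (∑ i, v i = 0) → (∀ j : Fin m, 0 ≤ ∑ i ∈ Finset.Iic j, v i) →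
    (∑ i, (v i).toNat = N) →
    ∃ l : List (Fin m → ℤ), (∀ x ∈ l, x ∈ typeAPositiveRoots m) ∧ l.sum = v ∧
      l.length = N := by
  intro N
  induction N with
  | zero =>
    intro v hsum _ htot
    refine ⟨[], by simp, ?_, rfl⟩
    have h0 : ∀ i ∈ Finset.univ, (v i).toNat = 0 :=
      Finset.sum_eq_zero_iff.mp htot
    have hle : ∀ i ∈ Finset.univ, v i ≤ 0 := by
      intro i hi; have := h0 i hi; omega
    have := (Finset.sum_eq_zero_iff_of_nonpos hle).mp hsum
    funext i
    simpa using (this i (Finset.mem_univ i)).symm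
  | succ N ih =>
    intro v hsum hpre htot
    -- some coordinate is positive
    have hexpos : ∃ i, 0 < v i := by
      by_contra h
      push_neg at h
      have : ∑ i, (v i).toNat = 0 := by
        apply Finset.sum_eq_zero
        intro i _
        have := h i; omega
      omega
    obtain ⟨i0, hi0⟩ := hexpos
    -- some coordinate is negative
    have hexneg : (Finset.univ.filter fun j => v j < 0).Nonempty := by
      by_contra h
      rw [Finset.not_nonempty_iff_eq_empty, Finset.filter_eq_empty_iff] at h
      have hge : ∀ i ∈ Finset.univ, 0 ≤ v i := by
        intro i hi; have := h hi; omega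
      have hsum' : v i0 ≤ ∑ i, v i :=
        Finset.single_le_sum hge (Finset.mem_univ i0)
      omega
    set j := (Finset.univ.filter fun j => v j < 0).min' hexneg with hj
    have hjneg : v j < 0 := by
      have := (Finset.univ.filter fun j => v j < 0).min'_mem hexneg
      simpa using (Finset.mem_filter.mp this).2
    have hjmin : ∀ t, t < j → 0 ≤ v t := by
      intro t ht
      by_contra h
      have : t ∈ Finset.univ.filter fun j => v j < 0 := by
        simp; omega
      have := Finset.min'_le _ t this
      omega
    -- find i < j with v i > 0
    have hIio : 0 < ∑ t ∈ Finset.Iio j, v t := by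
      have h1 := hpre j
      have h2 : ∑ t ∈ Finset.Iic j, v t = v j + ∑ t ∈ Finset.Iio j, v t := by
        rw [show Finset.Iic j = insert j (Finset.Iio j) from (Finset.Iio_insert j).symm,
          Finset.sum_insert (by simp)]
      omega
    have hexi : ∃ i ∈ Finset.Iio j, 0 < v i := by
      by_contra h
      push_neg at h
      have : ∑ t ∈ Finset.Iio j, v t ≤ 0 := Finset.sum_nonpos h
      omega
    obtain ⟨i, hiIio, hipos⟩ := hexi
    have hij : i < j := Finset.mem_Iio.mp hiIio
    set r : Fin m → ℤ := Pi.single i 1 - Pi.single j 1 with hr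
    set v' : Fin m → ℤ := v - r with hv'
    have hrmem : r ∈ typeAPositiveRoots m := ⟨i, j, hij, rfl⟩
    have hra : ∀ k, r k = (if k = i then 1 else 0) - (if k = j then 1 else 0) :=
      fun k => root_apply i j k
    -- new sum is zero
    have hsum' : ∑ t, v' t = 0 := by
      simp only [hv', Pi.sub_apply, Finset.sum_sub_distrib, hsum]
      have : ∑ t, r t = 0 := by
        simp only [hra, Finset.sum_sub_distrib, Finset.sum_ite_eq', Finset.mem_univ,
          if_true, sub_self]
      omega
    -- prefix sums remain nonneg
    have hpresplit : ∀ k : Fin m, ∑ t ∈ Finset.Iic k, v' t =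
        (∑ t ∈ Finset.Iic k, v t) -
          ((if i ≤ k then (1:ℤ) else 0) - (if j ≤ k then 1 else 0)) := by
      intro k
      simp only [hv', Pi.sub_apply, Finset.sum_sub_distrib]
      congr 1
      simp only [hra, Finset.sum_sub_distrib, Finset.sum_ite_eq', Finset.mem_Iic]
    have hpre' : ∀ k : Fin m, 0 ≤ ∑ t ∈ Finset.Iic k, v' t := by
      intro k
      rw [hpresplit k]
      rcases le_or_gt j k with hjk | hjk
      · have hik : i ≤ k := le_of_lt (lt_of_lt_of_le hij hjk)
        rw [if_pos hik, if_pos hjk]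
        have := hpre k
        omega
      · rw [if_neg (not_le.mpr hjk)]
        rcases le_or_gt i k with hik | hik
        · rw [if_pos hik]
          have hterm : ∀ t ∈ Finset.Iic k, 0 ≤ v t := by
            intro t ht
            exact hjmin t (lt_of_le_of_lt (Finset.mem_Iic.mp ht) hjk)
          have := Finset.single_le_sum hterm (Finset.mem_Iic.mpr hik)
          omega
        · rw [if_neg (not_le.mpr hik)]
          have := hpre k
          omega
    -- toNat sum decreases by one
    have hne : j ≠ i := hij.ne'
    have hvi : v' i = v i - 1 := by
      simp only [hv', Pi.sub_apply, hra i, eq_self_iff_true, if_true, if_neg hij.ne]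
      ring
    have hvj : v' j = v j + 1 := by
      simp only [hv', Pi.sub_apply, hra j, eq_self_iff_true, if_true, if_neg hne]
      ring
    have hvo : ∀ t, t ≠ i → t ≠ j → v' t = v t := by
      intro t h1 h2
      simp only [hv', Pi.sub_apply, hra t, if_neg h1, if_neg h2]; ring
    have htot' : ∑ t, (v' t).toNat = N := by
      have hjmem : j ∈ Finset.univ.erase i := by
        simp [hne]
      have e1 : ∀ f : Fin m → ℕ, ∑ t, f t
          = (∑ t ∈ (Finset.univ.erase i).erase j, f t) + f j + f i := by
        intro f
        rw [Finset.sum_erase_add _ _ hjmem, Finset.sum_erase_add _ _ (Finset.mem_univ i)]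
      rw [e1 (fun t => (v' t).toNat)] at *
      rw [e1 (fun t => (v t).toNat)] at htot
      have heq : ∑ t ∈ (Finset.univ.erase i).erase j, (v' t).toNat
          = ∑ t ∈ (Finset.univ.erase i).erase j, (v t).toNat := by
        apply Finset.sum_congr rfl
        intro t ht
        have h2 := Finset.ne_of_mem_erase ht
        have h1 := Finset.ne_of_mem_erase (Finset.mem_of_mem_erase ht)
        rw [hvo t h1 h2]
      rw [heq, hvi, hvj]
      omega
    obtain ⟨l, hl1, hl2, hl3⟩ := ih v' hsum' hpre' htot'
    refine ⟨r :: l, ?_, ?_, by simp [hl3]⟩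
    · intro x hx
      rcases List.mem_cons.mp hx with h | h
      · exact h ▸ hrmem
      · exact hl1 x h
    · simp only [List.sum_cons, hl2, hv']
      ring

private lemma dominance_aux {m : ℕ} (f : Fin m → ℤ)
    (hf : ∀ i j : Fin m, i ≤ j → f j ≤ f i) (j : Fin m) (T : Finset (Fin m))
    (hT : T.card = (Finset.Iic j).card) :
    ∑ t ∈ T, f t ≤ ∑ t ∈ Finset.Iic j, f t := by
  set S := Finset.Iic j with hS
  have hcard : (T \ S).card = (S \ T).card := by
    have h1 := Finset.card_sdiff_add_card_inter T S
    have h2 := Finset.card_sdiff_add_card_inter S T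
    rw [Finset.inter_comm] at h2
    omega
  have e1 : ∑ t ∈ T, f t = (∑ t ∈ T ∩ S, f t) + ∑ t ∈ T \ S, f t :=
    (Finset.sum_inter_add_sum_sdiff T S f).symm
  have e2 : ∑ t ∈ S, f t = (∑ t ∈ T ∩ S, f t) + ∑ t ∈ S \ T, f t := by
    rw [Finset.inter_comm]
    exact (Finset.sum_inter_add_sum_sdiff S T f).symm
  have h3 : ∑ t ∈ T \ S, f t ≤ (T \ S).card • f j := by
    apply Finset.sum_le_card_nsmul
    intro t ht
    have : t ∉ S := (Finset.mem_sdiff.mp ht).2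
    rw [hS, Finset.mem_Iic] at this
    exact hf j t (le_of_lt (not_le.mp this))
  have h4 : (S \ T).card • f j ≤ ∑ t ∈ S \ T, f t := by
    apply Finset.card_nsmul_le_sum
    intro t ht
    have : t ∈ S := (Finset.mem_sdiff.mp ht).1
    rw [hS, Finset.mem_Iic] at this
    exact hf t j this
  rw [e1, e2]
  have : (T \ S).card • f j = (S \ T).card • f j := by rw [hcard]
  omega

/-- For a dominant (nonincreasing) `λ ∈ ℤ^m` and a permutation `w` of `{1,…,m}`,
the vector `λ - w(λ)` is a sum of positive roots of type `A_{m-1}`, and the minimal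
number of positive roots (with repetitions) summing to it equals the sum of the
positive entries of `λ - w(λ)`. -/
theorem extremal_kostant_degree_typeA (m : ℕ) (hm : 2 ≤ m)
    (lam : Fin m → ℤ) (hdom : ∀ i j : Fin m, i ≤ j → lam j ≤ lam i)
    (w : Equiv.Perm (Fin m)) :
    IsLeast {N : ℕ | ∃ l : List (Fin m → ℤ),
        (∀ v ∈ l, v ∈ typeAPositiveRoots m) ∧
        l.sum = (fun i => lam i - lam (w i)) ∧
        l.length = N}
      (∑ i : Fin m, (lam i - lam (w i)).toNat) := by
  constructor
  · -- membership
    have hsum : ∑ i, (lam i - lam (w i)) = 0 := by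
      rw [Finset.sum_sub_distrib]
      rw [Equiv.sum_comp w lam]
      ring
    have hpre : ∀ j : Fin m, 0 ≤ ∑ i ∈ Finset.Iic j, (lam i - lam (w i)) := by
      intro j
      rw [Finset.sum_sub_distrib]
      have himg : ∑ i ∈ Finset.Iic j, lam (w i)
          = ∑ t ∈ (Finset.Iic j).image w, lam t := by
        rw [Finset.sum_image (fun a _ b _ h => w.injective h)]
      rw [himg]
      have := dominance_aux lam hdom j ((Finset.Iic j).image w)
        (Finset.card_image_of_injective _ w.injective)
      omega
    exact exists_root_list _ _ hsum hpre rfl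
  · -- lower bound
    rintro N ⟨l, hroots, hls, hlen⟩
    have : (∑ i : Fin m, (l.sum i).toNat) ≤ l.length := sum_toNat_le_length l hroots
    rw [hls] at this
    have h2 : (∑ i : Fin m, ((fun i => lam i - lam (w i)) i).toNat)
        = ∑ i : Fin m, (lam i - lam (w i)).toNat := rfl
    omega
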